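/- arXiv:1406.7363 — 4 statements merged into one kernel-verified Lean document; each statement's English description precedes it below -/
import Mathlib

section
/- Let A = (Q, Σ, δ, P) be an exact ε-machine. Then for each state p ∈ Q and each length L ≥ 1, the probability of generating a non-reset word of length L from p is upper bounded by R^L_p and lower bounded by MaxR^L_p; that is, MaxR^L_p ≤ Σ_{w : |w| = L, w not a reset word} P_p(w) ≤ R^L_p. -/
open scoped BigOperators ENNReal

attribute [local instance] Classical.propDecidable

variable {Q A : Type*}

/-- Extension of a partial transition function to words. -/
def stepWord (δ : Q → A → Option Q) : Q → List A → Option Q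
  | q, [] => some q
  | q, a :: w => (δ q a).bind fun q' => stepWord δ q' w

/-- Probability of generating a word from a given state. -/
noncomputable def probWord (P : Q → A → ℝ) (δ : Q → A → Option Q) : Q → List A → ℝ
  | _, [] => 1
  | p, a :: w => P p a * ((δ p a).elim 0 fun p' => probWord P δ p' w)

/-- `w` is a reset word: the set of defined images of all states under `w` is a singleton. -/
def IsResetWord (δ : Q → A → Option Q) (w : List A) : Prop :=
  ∃ r : Q, (∃ q : Q, stepWord δ q w = some r) ∧ ∀ q s : Q, stepWord δ q w = some s → s = r

/-- `w` merges the pair `{p, q}` : the set of defined images of `p` and `q` under `w`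
is a singleton. -/
def MergedBy (δ : Q → A → Option Q) (p q : Q) (w : List A) : Prop :=
  ∃ r : Q, (stepWord δ p w = some r ∨ stepWord δ q w = some r) ∧
    (∀ s : Q, stepWord δ p w = some s → s = r) ∧ ∀ s : Q, stepWord δ q w = some s → s = r

/-- A deadlock pair : a pair of distinct states that no word merges. -/
def IsDeadlockPair (δ : Q → A → Option Q) (p q : Q) : Prop :=
  p ≠ q ∧ ∀ w : List A, ¬ MergedBy δ p q w

/-- An ε-machine. -/
structure EpsMachine (Q A : Type*) [Fintype Q] [Fintype A] : Type _ where
  δ : Q → A → Option Q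
  P : Q → A → ℝ
  nonneg : ∀ q a, 0 ≤ P q a
  sum_one : ∀ q : Q, ∑ a : A, P q a = 1
  zero_iff : ∀ q a, P q a = 0 ↔ δ q a = none
  strong_conn : ∀ p q : Q, ∃ w : List A, stepWord δ p w = some q
  card_alpha : 1 < Fintype.card A
  nonequiv : ∀ p q : Q, p ≠ q → ∃ u : List A, probWord P δ p u ≠ probWord P δ q u

/-- An ε-machine is exact if it admits a reset word. -/
def IsExact [Fintype Q] [Fintype A] (M : EpsMachine Q A) : Prop :=
  ∃ w : List A, IsResetWord M.δ w

/-- Transition function of the pair semi-machine `A₂`. -/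
noncomputable def pairStep (δ : Q → A → Option Q) (pq : Q × Q) (a : A) : Option (Q × Q) :=
  match δ pq.1 a, δ pq.2 a with
  | some p', some q' => if p' = q' then none else some (p', q')
  | _, _ => none

/-- Weights of the pair semi-machine `A₂`. -/
noncomputable def pairP (δ : Q → A → Option Q) (P : Q → A → ℝ) (pq : Q × Q) (a : A) : ℝ :=
  if pairStep δ pq a = none then 0 else P pq.1 a

/-- The states of the pair semi-machine : ordered pairs of distinct states. -/
abbrev PairState (Q : Type*) := {pq : Q × Q // pq.1 ≠ pq.2}

variable [Fintype Q] [Fintype A]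

/-- The transition probability matrix `T(A₂)` of the pair semi-machine. -/
noncomputable def pairMatrix (δ : Q → A → Option Q) (P : Q → A → ℝ) :
    Matrix (PairState Q) (PairState Q) ℝ :=
  fun s t => ∑ a : A, if pairStep δ s.val a = some t.val then P s.val.1 a else 0

/-- `R^L_{p,q}` : the sum of the `(p,q)`-th row entries of `T(A₂)^L`. -/
noncomputable def RLrow (δ : Q → A → Option Q) (P : Q → A → ℝ) (L : ℕ) (s : PairState Q) : ℝ :=
  ∑ t : PairState Q, (pairMatrix δ P ^ L) s t

/-- `R^L_p = ∑_{q ≠ p} R^L_{p,q}`. -/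
noncomputable def RLp (δ : Q → A → Option Q) (P : Q → A → ℝ) (L : ℕ) (p : Q) : ℝ :=
  ∑ q : Q, if h : p = q then 0 else RLrow δ P L ⟨(p, q), h⟩

/-- `MaxR^L_p = max_{q ≠ p} R^L_{p,q}`. -/
noncomputable def MaxRLp (δ : Q → A → Option Q) (P : Q → A → ℝ) (L : ℕ) (p : Q) : ℝ :=
  sSup {x : ℝ | ∃ (q : Q) (h : p ≠ q), x = RLrow δ P L ⟨(p, q), h⟩}

/-- `π` is a positive stationary (steady state) probability distribution of the Markov chain
on the machine states with transition probabilities `P(p → q) = ∑_{x : p.x = q} P_p(x)`. -/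
def IsStationaryDist (δ : Q → A → Option Q) (P : Q → A → ℝ) (π : Q → ℝ) : Prop :=
  (∀ q, 0 < π q) ∧ (∑ q : Q, π q = 1) ∧
    ∀ q : Q, π q = ∑ p : Q, π p * ∑ a : A, if δ p a = some q then P p a else 0

/-- `P_π(w) = ∑_q π_q P_q(w)`. -/
noncomputable def Ppi (δ : Q → A → Option Q) (P : Q → A → ℝ) (π : Q → ℝ) (w : List A) : ℝ :=
  ∑ q : Q, π q * probWord P δ q w

/-- `P_π(NSYN_L)` : the probability of generating a non-reset word of length `L`. -/
noncomputable def nsynProb (δ : Q → A → Option Q) (P : Q → A → ℝ) (π : Q → ℝ) (L : ℕ) : ℝ :=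
  ∑ w : Fin L → A, if IsResetWord δ (List.ofFn w) then 0 else Ppi δ P π (List.ofFn w)

/-- The maximum row sum (the `‖·‖₁` norm of a nonnegative matrix). -/
noncomputable def maxRowSum {n : Type*} [Fintype n] (T : Matrix n n ℝ) : ℝ :=
  sSup {x : ℝ | ∃ s : n, x = ∑ t : n, T s t}

/-- The belief distribution `φ(w)` of the observer after the machine generated `w`. -/
noncomputable def belief (δ : Q → A → Option Q) (P : Q → A → ℝ) (π : Q → ℝ)
    (w : List A) (q : Q) : ℝ :=
  (∑ p : Q, if stepWord δ p w = some q then π p * probWord P δ p w else 0) / Ppi δ P π w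

/-- `Q_L(w) = 1 - max_q φ(w)_q` : the combined probability of all states other than the
most likely one. -/
noncomputable def QLw (δ : Q → A → Option Q) (P : Q → A → ℝ) (π : Q → ℝ) (w : List A) : ℝ :=
  1 - sSup (Set.range (belief δ P π w))

/-- `P(Q_L > b^L)`. -/
noncomputable def probQLgt (δ : Q → A → Option Q) (P : Q → A → ℝ) (π : Q → ℝ)
    (b : ℝ) (L : ℕ) : ℝ :=
  ∑ w : Fin L → A, if b ^ L < QLw δ P π (List.ofFn w) then Ppi δ P π (List.ofFn w) else 0

/-- The prediction rate constant `prc(A)` : the infimum of all `a > 0` such that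
`P(Q_L > a^L) → 0` as `L → ∞`. -/
noncomputable def prc (δ : Q → A → Option Q) (P : Q → A → ℝ) (π : Q → ℝ) : ℝ :=
  sInf {a : ℝ | 0 < a ∧
    Filter.Tendsto (fun L : ℕ => probQLgt δ P π a L) Filter.atTop (nhds 0)}

/-- `E(Q_L^{1/L})`. -/
noncomputable def EQL (δ : Q → A → Option Q) (P : Q → A → ℝ) (π : Q → ℝ) (L : ℕ) : ℝ :=
  ∑ w : Fin L → A, Ppi δ P π (List.ofFn w) * QLw δ P π (List.ofFn w) ^ ((L : ℝ)⁻¹)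

/-- `E(1/Q_L^{1/L})`, computed in the extended reals (with `1/0 = ∞`). -/
noncomputable def EinvQL (δ : Q → A → Option Q) (P : Q → A → ℝ) (π : Q → ℝ) (L : ℕ) : ℝ≥0∞ :=
  ∑ w : Fin L → A, ENNReal.ofReal (Ppi δ P π (List.ofFn w)) *
    (ENNReal.ofReal (QLw δ P π (List.ofFn w)))⁻¹ ^ ((L : ℝ)⁻¹)

/-- A deadlock component : a nonempty, strongly connected set of deadlock pairs closed
under the action of all letters. -/
def IsDeadlockComponent (δ : Q → A → Option Q) (S : Set (Q × Q)) : Prop :=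
  S.Nonempty ∧ (∀ pq ∈ S, IsDeadlockPair δ pq.1 pq.2) ∧
    (∀ pq ∈ S, ∀ a : A, ∀ r : Q × Q, pairStep δ pq a = some r → r ∈ S) ∧
    ∀ pq ∈ S, ∀ rs ∈ S, ∃ w : List A, stepWord (pairStep δ) pq w = some rs

/-- The states of the edge machine `M_edge` of a component `S` of the pair semi-machine :
pairs `(x, k)` with `k ∈ S` and `P_k(x) > 0`. -/
abbrev EdgeState (δ : Q → A → Option Q) (P : Q → A → ℝ) (S : Set (Q × Q)) :=
  {e : A × (Q × Q) // e.2 ∈ S ∧ 0 < pairP δ P e.2 e.1}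

/-- `ρ` is a stationary (equilibrium) distribution of the edge machine `M_edge`,
whose transition probabilities are `P((x,k) → (y,j)) = P_j(y)·I(x,k,j)`. -/
def IsEdgeStationary (δ : Q → A → Option Q) (P : Q → A → ℝ) (S : Set (Q × Q))
    (ρ : EdgeState δ P S → ℝ) : Prop :=
  (∀ r, 0 ≤ ρ r) ∧ (∑ r : EdgeState δ P S, ρ r = 1) ∧
    ∀ t : EdgeState δ P S, ρ t = ∑ s : EdgeState δ P S, ρ s *
      (if pairStep δ s.val.2 s.val.1 = some t.val.2 then pairP δ P t.val.2 t.val.1 else 0)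

/-- `E_M = ∑_r ρ_r F(r)` where `F((x,(p,q))) = ln (P_p(x) / P_q(x))`. -/
noncomputable def EMval (δ : Q → A → Option Q) (P : Q → A → ℝ) (S : Set (Q × Q))
    (ρ : EdgeState δ P S → ℝ) : ℝ :=
  ∑ r : EdgeState δ P S, ρ r * Real.log (P r.val.2.1 r.val.1 / P r.val.2.2 r.val.1)

namespace Stmt0Aux

lemma probWord_nonneg (P : Q → A → ℝ) (δ : Q → A → Option Q)
    (hP : ∀ q a, 0 ≤ P q a) : ∀ (w : List A) (p : Q), 0 ≤ probWord P δ p w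
  | [], p => by simp [probWord]
  | a :: w, p => by
    simp only [probWord]
    apply mul_nonneg (hP p a)
    cases h : δ p a with
    | none => simp
    | some p' => simpa using probWord_nonneg P δ hP w p'

lemma stepWord_cons (δ : Q → A → Option Q) (p : Q) (a : A) (w : List A) :
    stepWord δ p (a :: w) = (δ p a).bind fun p' => stepWord δ p' w := rfl

lemma probWord_pos_step (P : Q → A → ℝ) (δ : Q → A → Option Q)
    (hP : ∀ q a, 0 ≤ P q a) :
    ∀ (w : List A) (p : Q), 0 < probWord P δ p w → ∃ r, stepWord δ p w = some r
  | [], p, _ => ⟨p, rfl⟩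
  | a :: w, p, h => by
    simp only [probWord] at h
    cases hd : δ p a with
    | none => rw [hd] at h; simp at h
    | some p' =>
      rw [hd] at h
      simp only [Option.elim] at h
      have hw : 0 < probWord P δ p' w := by
        by_contra hle
        push_neg at hle
        nlinarith [hP p a]
      obtain ⟨r, hr⟩ := probWord_pos_step P δ hP w p' hw
      exact ⟨r, by rw [stepWord_cons, hd]; simpa using hr⟩

lemma pairStep_some {δ : Q → A → Option Q} {s u : Q × Q} {a : A} :
    pairStep δ s a = some u ↔ δ s.1 a = some u.1 ∧ δ s.2 a = some u.2 ∧ u.1 ≠ u.2 := by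
  obtain ⟨u1, u2⟩ := u
  unfold pairStep
  cases h1 : δ s.1 a with
  | none => simp
  | some p' =>
    cases h2 : δ s.2 a with
    | none => simp
    | some q' =>
      by_cases hpq : p' = q' <;> simp [hpq] <;> aesop

lemma pair_forward {δ : Q → A → Option Q} :
    ∀ (w : List A) (s t : Q × Q), s.1 ≠ s.2 →
      stepWord (pairStep δ) s w = some t →
      stepWord δ s.1 w = some t.1 ∧ stepWord δ s.2 w = some t.2 ∧ t.1 ≠ t.2
  | [], s, t, hne, h => by
    simp only [stepWord, Option.some_inj] at h
    subst h
    exact ⟨rfl, rfl, hne⟩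
  | a :: w, s, t, hne, h => by
    rw [stepWord_cons] at h
    cases hp : pairStep δ s a with
    | none => rw [hp] at h; simp at h
    | some u =>
      rw [hp] at h
      simp only [Option.bind_some, Option.bind_some] at h
      obtain ⟨h1, h2, h3⟩ := pairStep_some.mp hp
      obtain ⟨g1, g2, g3⟩ := pair_forward w u t h3 h
      refine ⟨?_, ?_, g3⟩
      · rw [stepWord_cons, h1]; simpa using g1
      · rw [stepWord_cons, h2]; simpa using g2

lemma pair_backward {δ : Q → A → Option Q} :
    ∀ (w : List A) (p q a b : Q), stepWord δ p w = some a → stepWord δ q w = some b →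
      a ≠ b → stepWord (pairStep δ) (p, q) w = some (a, b)
  | [], p, q, a, b, hp, hq, hne => by
    simp only [stepWord, Option.some_inj] at hp hq ⊢
    exact Prod.ext hp hq
  | x :: w, p, q, a, b, hp, hq, hne => by
    rw [stepWord_cons] at hp hq ⊢
    cases h1 : δ p x with
    | none => rw [h1] at hp; simp at hp
    | some p' =>
      cases h2 : δ q x with
      | none => rw [h2] at hq; simp at hq
      | some q' =>
        rw [h1] at hp; rw [h2] at hq
        simp only [Option.bind_some, Option.bind_some] at hp hq
        have hne' : p' ≠ q' := by
          rintro rfl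
          rw [hp] at hq
          exact hne (Option.some_inj.mp hq)
        have hps : pairStep δ (p, q) x = some (p', q') := pairStep_some.mpr ⟨h1, h2, hne'⟩
        rw [hps]
        simpa using pair_backward w p' q' a b hp hq hne

variable [Fintype Q] [Fintype A]

/-- Word-sum form of the row sums. -/
noncomputable def gsum (δ : Q → A → Option Q) (P : Q → A → ℝ) (L : ℕ) (s : Q × Q) : ℝ :=
  ∑ w : Fin L → A, if (stepWord (pairStep δ) s (List.ofFn w)).isSome
    then probWord P δ s.1 (List.ofFn w) else 0

lemma sum_ofFn_succ (L : ℕ) (F : List A → ℝ) :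
    ∑ w : Fin (L + 1) → A, F (List.ofFn w)
      = ∑ a : A, ∑ w : Fin L → A, F (a :: List.ofFn w) := by
  rw [← Equiv.sum_comp (Fin.consEquiv fun _ : Fin (L + 1) => A)
      (fun w => F (List.ofFn w)), Fintype.sum_prod_type]
  refine Finset.sum_congr rfl fun a _ => Finset.sum_congr rfl fun w _ => ?_
  congr 1
  simp [Fin.consEquiv, List.ofFn_succ]

lemma row_eq (δ : Q → A → Option Q) (P : Q → A → ℝ) :
    ∀ (L : ℕ) (s : PairState Q), RLrow δ P L s = gsum δ P L s.val
  | 0, s => by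
    simp [RLrow, gsum, Matrix.one_apply, stepWord, probWord]
  | L + 1, s => by
    have hrow : RLrow δ P (L + 1) s
        = ∑ u : PairState Q, pairMatrix δ P s u * RLrow δ P L u := by
      calc RLrow δ P (L + 1) s
          = ∑ t : PairState Q, ∑ u : PairState Q,
              pairMatrix δ P s u * (pairMatrix δ P ^ L) u t := by
            simp only [RLrow, pow_succ', Matrix.mul_apply]
        _ = ∑ u : PairState Q, pairMatrix δ P s u
              * ∑ t : PairState Q, (pairMatrix δ P ^ L) u t := by
            rw [Finset.sum_comm]
            simp [Finset.mul_sum]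
        _ = _ := rfl
    have key : ∀ a : A,
        (∑ u : PairState Q, if pairStep δ s.val a = some u.val
            then P s.val.1 a * gsum δ P L u.val else 0)
          = (pairStep δ s.val a).elim 0 fun v => P s.val.1 a * gsum δ P L v := by
      intro a
      cases hp : pairStep δ s.val a with
      | none => simp
      | some v =>
        have hv : v.1 ≠ v.2 := (pairStep_some.mp hp).2.2
        rw [Finset.sum_eq_single (⟨v, hv⟩ : PairState Q)]
        · simp
        · intro u _ hu
          rw [if_neg]
          intro h
          exact hu (Subtype.ext (Option.some_inj.mp h).symm)
        · simp
    have hg : gsum δ P (L + 1) s.val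
        = ∑ a : A, (pairStep δ s.val a).elim 0 fun v => P s.val.1 a * gsum δ P L v := by
      unfold gsum
      rw [sum_ofFn_succ L fun l => if (stepWord (pairStep δ) s.val l).isSome
        then probWord P δ s.val.1 l else 0]
      refine Finset.sum_congr rfl fun a _ => ?_
      cases hp : pairStep δ s.val a with
      | none =>
        simp only [Option.elim]
        apply Finset.sum_eq_zero
        intro w _
        rw [if_neg]
        rw [stepWord_cons, hp]
        simp
      | some v =>
        obtain ⟨h1, _, _⟩ := pairStep_some.mp hp
        simp only [Option.elim, Finset.mul_sum]
        refine Finset.sum_congr rfl fun w _ => ?_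
        rw [stepWord_cons, hp]
        simp only [Option.bind_some, Option.bind_some]
        rw [show probWord P δ s.val.1 (a :: List.ofFn w)
          = P s.val.1 a * ((δ s.val.1 a).elim 0 fun p' => probWord P δ p' (List.ofFn w))
          from rfl, h1]
        simp [mul_ite]
    rw [hrow, hg]
    have : ∀ u : PairState Q, pairMatrix δ P s u * RLrow δ P L u
        = ∑ a : A, if pairStep δ s.val a = some u.val
            then P s.val.1 a * gsum δ P L u.val else 0 := by
      intro u
      rw [row_eq δ P L u, pairMatrix, Finset.sum_mul]
      refine Finset.sum_congr rfl fun a _ => ?_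
      split <;> simp
    simp only [this]
    rw [Finset.sum_comm]
    exact Finset.sum_congr rfl fun a _ => key a

end Stmt0Aux

/-- Theorem 1: for an exact ε-machine, for each state `p` and each `L ≥ 1`,
the probability of generating a non-reset word of length `L` from `p` is upper bounded by
`R^L_p` and lower bounded by `MaxR^L_p`. -/
theorem stmt0 {Q A : Type*} [Fintype Q] [Fintype A] (M : EpsMachine Q A)
    (hexact : IsExact M) (p : Q) (L : ℕ) (hL : 1 ≤ L) :
    MaxRLp M.δ M.P L p ≤
        (∑ w : Fin L → A,
          if IsResetWord M.δ (List.ofFn w) then 0 else probWord M.P M.δ p (List.ofFn w)) ∧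
      (∑ w : Fin L → A,
          if IsResetWord M.δ (List.ofFn w) then 0 else probWord M.P M.δ p (List.ofFn w)) ≤
        RLp M.δ M.P L p := by
  classical
  open Stmt0Aux in
  set δ := M.δ
  set P := M.P
  have hP : ∀ q a, 0 ≤ P q a := M.nonneg
  -- nonnegativity of the non-reset sum
  have hnn : (0:ℝ) ≤ ∑ w : Fin L → A,
      if IsResetWord δ (List.ofFn w) then 0 else probWord P δ p (List.ofFn w) := by
    apply Finset.sum_nonneg
    intro w _
    split
    · exact le_refl 0
    · exact probWord_nonneg P δ hP _ p
  constructor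
  · -- lower bound
    apply Real.sSup_le _ hnn
    rintro x ⟨q, hq, rfl⟩
    rw [Stmt0Aux.row_eq]
    unfold Stmt0Aux.gsum
    apply Finset.sum_le_sum
    intro w _
    by_cases hs : (stepWord (pairStep δ) ((p, q) : Q × Q) (List.ofFn w)).isSome
    · rw [if_pos hs]
      obtain ⟨t, ht⟩ := Option.isSome_iff_exists.mp hs
      obtain ⟨h1, h2, h3⟩ := Stmt0Aux.pair_forward (List.ofFn w) (p, q) t hq ht
      have hnr : ¬ IsResetWord δ (List.ofFn w) := by
        rintro ⟨r, -, hall⟩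
        exact h3 ((hall p t.1 h1).trans (hall q t.2 h2).symm)
      rw [if_neg hnr]
    · rw [if_neg hs]
      split
      · exact le_refl 0
      · exact probWord_nonneg P δ hP _ p
  · -- upper bound
    have hR : RLp δ P L p = ∑ q : Q, if p = q then 0 else Stmt0Aux.gsum δ P L (p, q) := by
      unfold RLp
      refine Finset.sum_congr rfl fun q _ => ?_
      by_cases h : p = q
      · simp [h]
      · rw [dif_neg h, if_neg h, Stmt0Aux.row_eq]
    rw [hR]
    have hswap : ∑ q : Q, (if p = q then (0:ℝ) else Stmt0Aux.gsum δ P L (p, q))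
        = ∑ w : Fin L → A, ∑ q : Q, (if p = q then (0:ℝ) else
            if (stepWord (pairStep δ) ((p, q) : Q × Q) (List.ofFn w)).isSome
              then probWord P δ p (List.ofFn w) else 0) := by
      rw [Finset.sum_comm]
      refine Finset.sum_congr rfl fun q _ => ?_
      by_cases h : p = q
      · simp [h]
      · simp only [if_neg h]
        rfl
    rw [hswap]
    apply Finset.sum_le_sum
    intro w _
    by_cases hr : IsResetWord δ (List.ofFn w)
    · rw [if_pos hr]
      apply Finset.sum_nonneg
      intro q _
      split
      · exact le_refl 0
      split
      · exact probWord_nonneg P δ hP _ p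
      · exact le_refl 0
    · rw [if_neg hr]
      rcases le_or_gt (probWord P δ p (List.ofFn w)) 0 with hle | hpos
      · refine hle.trans (Finset.sum_nonneg fun q _ => ?_)
        split
        · exact le_refl 0
        split
        · exact probWord_nonneg P δ hP _ p
        · exact le_refl 0
      · obtain ⟨r₀, hr₀⟩ := probWord_pos_step P δ hP (List.ofFn w) p hpos
        -- there is a state not merging with p
        have hex : ∃ q s, stepWord δ q (List.ofFn w) = some s ∧ s ≠ r₀ := by
          by_contra hcon
          push_neg at hcon
          exact hr ⟨r₀, ⟨p, hr₀⟩, fun q s h => hcon q s h⟩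
        obtain ⟨q, s, hqs, hsne⟩ := hex
        have hpq : p ≠ q := by
          rintro rfl
          rw [hr₀] at hqs
          exact hsne (Option.some_inj.mp hqs.symm)
        have hpair : stepWord (pairStep δ) ((p, q) : Q × Q) (List.ofFn w) = some (r₀, s) :=
          Stmt0Aux.pair_backward (List.ofFn w) p q r₀ s hr₀ hqs (fun h => hsne h.symm)
        have hterm : (if p = q then (0:ℝ) else
            if (stepWord (pairStep δ) ((p, q) : Q × Q) (List.ofFn w)).isSome
              then probWord P δ p (List.ofFn w) else 0) = probWord P δ p (List.ofFn w) := by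
          rw [if_neg hpq, if_pos (by rw [hpair]; rfl)]
        calc probWord P δ p (List.ofFn w)
            = _ := hterm.symm
          _ ≤ _ := by
              apply Finset.single_le_sum (f := fun q' : Q => if p = q' then (0:ℝ) else
                if (stepWord (pairStep δ) ((p, q') : Q × Q) (List.ofFn w)).isSome
                  then probWord P δ p (List.ofFn w) else 0) (fun q' _ => ?_) (Finset.mem_univ q)
              split
              · exact le_refl 0
              split
              · exact probWord_nonneg P δ hP _ p
              · exact le_refl 0
end

section
/- Let A = (Q, Σ, δ, P) be an exact ε-machine with steady state distribution π. Then for each L ≥ 1, Σ_{p ∈ Q} π_p · MaxR^L_p ≤ P_π(NSYN_L) ≤ Σ_{p ∈ Q} π_p · R^L_p. -/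
open scoped BigOperators ENNReal

attribute [local instance] Classical.propDecidable

variable {Q A : Type*}

variable [Fintype Q] [Fintype A]

/-! ### Auxiliary lemmas for `stmt1` -/

section AuxStmt1

variable {Q' A' : Type*}

lemma probWord_nonneg' (P : Q' → A' → ℝ) (δ : Q' → A' → Option Q')
    (hP : ∀ q a, 0 ≤ P q a) : ∀ (w : List A') (p : Q'), 0 ≤ probWord P δ p w
  | [], p => by simp [probWord]
  | a :: w, p => by
    refine mul_nonneg (hP p a) ?_
    cases h : δ p a with
    | none => simp
    | some p' => simpa using probWord_nonneg' P δ hP w p'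

lemma stepWord_of_probWord_ne (P : Q' → A' → ℝ) (δ : Q' → A' → Option Q') :
    ∀ (w : List A') (p : Q'), probWord P δ p w ≠ 0 → ∃ r, stepWord δ p w = some r
  | [], p, _ => ⟨p, rfl⟩
  | a :: w, p, h => by
    cases hd : δ p a with
    | none => exact absurd (by simp [probWord, hd]) h
    | some p' =>
      obtain ⟨r, hr⟩ := stepWord_of_probWord_ne P δ w p'
        (fun h0 => h (by simp [probWord, hd, h0]))
      exact ⟨r, by simp [stepWord, hd, hr]⟩

lemma pairStep_eq_some (δ : Q' → A' → Option Q') (pq : Q' × Q') (a : A') (r : Q' × Q') :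
    pairStep δ pq a = some r ↔ δ pq.1 a = some r.1 ∧ δ pq.2 a = some r.2 ∧ r.1 ≠ r.2 := by
  obtain ⟨r1, r2⟩ := r
  unfold pairStep
  rcases h1 : δ pq.1 a with _ | p' <;> rcases h2 : δ pq.2 a with _ | q'
  · simp
  · simp
  · simp
  · show (if p' = q' then none else some (p', q')) = some (r1, r2) ↔
      some p' = some (r1, r2).1 ∧ some q' = some (r1, r2).2 ∧ (r1, r2).1 ≠ (r1, r2).2
    by_cases hpq : p' = q'
    · rw [if_pos hpq]
      constructor
      · intro h; simp at h
      · rintro ⟨hr1, hr2, hne⟩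
        injection hr1 with e1; injection hr2 with e2
        exact absurd ((e1.symm.trans hpq).trans e2) hne
    · rw [if_neg hpq]
      constructor
      · intro h
        injection h with h'
        injection h' with e1 e2
        subst e1; subst e2
        exact ⟨rfl, rfl, hpq⟩
      · rintro ⟨hr1, hr2, -⟩
        injection hr1 with e1; injection hr2 with e2
        simp only [Option.some_inj, Prod.mk.injEq]
        exact ⟨e1, e2⟩

lemma pairStep_ne (δ : Q' → A' → Option Q') (pq : Q' × Q') (a : A') (r : Q' × Q')
    (h : pairStep δ pq a = some r) : r.1 ≠ r.2 :=
  ((pairStep_eq_some δ pq a r).mp h).2.2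

lemma stepWord_pair_proj (δ : Q' → A' → Option Q') :
    ∀ (w : List A') (pq rs : Q' × Q'), stepWord (pairStep δ) pq w = some rs →
      stepWord δ pq.1 w = some rs.1 ∧ stepWord δ pq.2 w = some rs.2 ∧
        (pq.1 ≠ pq.2 → rs.1 ≠ rs.2)
  | [], pq, rs, h => by cases h; exact ⟨rfl, rfl, id⟩
  | a :: w, pq, rs, h => by
    simp only [stepWord] at h
    cases hd : pairStep δ pq a with
    | none => rw [hd] at h; simp at h
    | some u =>
      rw [hd] at h; simp only [Option.bind_some] at h
      obtain ⟨hu1, hu2, hune⟩ := (pairStep_eq_some δ pq a u).mp hd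
      obtain ⟨h1, h2, h3⟩ := stepWord_pair_proj δ w u rs h
      exact ⟨by simp [stepWord, hu1, h1], by simp [stepWord, hu2, h2], fun _ => h3 hune⟩

lemma stepWord_pair_of (δ : Q' → A' → Option Q') :
    ∀ (w : List A') (p q r s : Q'), stepWord δ p w = some r → stepWord δ q w = some s →
      r ≠ s → stepWord (pairStep δ) (p, q) w = some (r, s)
  | [], p, q, r, s, h1, h2, _ => by cases h1; cases h2; rfl
  | a :: w, p, q, r, s, h1, h2, hne => by
    simp only [stepWord] at h1 h2
    cases hd1 : δ p a with
    | none => rw [hd1] at h1; simp at h1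
    | some p' =>
      cases hd2 : δ q a with
      | none => rw [hd2] at h2; simp at h2
      | some q' =>
        rw [hd1] at h1; rw [hd2] at h2
        simp only [Option.bind_some] at h1 h2
        have hne' : p' ≠ q' := by
          rintro rfl
          exact hne (Option.some_injective _ (h1.symm.trans h2))
        have hrec := stepWord_pair_of δ w p' q' r s h1 h2 hne
        have hps : pairStep δ (p, q) a = some (p', q') :=
          (pairStep_eq_some δ (p, q) a (p', q')).mpr ⟨hd1, hd2, hne'⟩
        simp only [stepWord, hps, Option.bind_some]
        exact hrec

/-- The transition function of the pair semi-machine, as a function on `PairState`. -/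
noncomputable def pairStepS (δ : Q' → A' → Option Q') (s : PairState Q') (a : A') :
    Option (PairState Q') :=
  (pairStep δ s.val a).bind fun r => if hr : r.1 ≠ r.2 then some ⟨r, hr⟩ else none

lemma pairStepS_eq_some (δ : Q' → A' → Option Q') (s : PairState Q') (a : A')
    (t : PairState Q') : pairStepS δ s a = some t ↔ pairStep δ s.val a = some t.val := by
  constructor
  · intro h
    cases hd : pairStep δ s.val a with
    | none => rw [pairStepS, hd] at h; simp at h
    | some r =>
      have hr := pairStep_ne δ s.val a r hd
      rw [pairStepS, hd] at h
      simp only [Option.bind_some, dif_pos hr, Option.some_inj] at h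
      rw [← h]
  · intro h
    rw [pairStepS, h]
    simp only [Option.bind_some, dif_pos t.prop]

lemma stepWord_pairStepS (δ : Q' → A' → Option Q') :
    ∀ (w : List A') (s t : PairState Q'),
      stepWord (pairStepS δ) s w = some t ↔ stepWord (pairStep δ) s.val w = some t.val
  | [], s, t => by
    simp only [stepWord, Option.some_inj]
    exact Subtype.ext_iff
  | a :: w, s, t => by
    simp only [stepWord]
    cases hd : pairStep δ s.val a with
    | none =>
      have hnone : pairStepS δ s a = none := by rw [pairStepS, hd]; rfl
      simp [hnone, hd]
    | some u =>
      have hu := pairStep_ne δ s.val a u hd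
      have hsome : pairStepS δ s a = some ⟨u, hu⟩ :=
        (pairStepS_eq_some δ s a ⟨u, hu⟩).mpr hd
      rw [hsome]
      simp only [Option.bind_some]
      exact stepWord_pairStepS δ w ⟨u, hu⟩ t

lemma probWord_pairStepS (δ : Q' → A' → Option Q') (P : Q' → A' → ℝ) :
    ∀ (w : List A') (s t : PairState Q'), stepWord (pairStepS δ) s w = some t →
      probWord (fun (u : PairState Q') a => P u.val.1 a) (pairStepS δ) s w =
        probWord P δ s.val.1 w
  | [], _, _, _ => rfl
  | a :: w, s, t, h => by
    simp only [stepWord] at h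
    cases hd : pairStepS δ s a with
    | none => rw [hd] at h; simp at h
    | some u =>
      rw [hd] at h; simp only [Option.bind_some] at h
      have hps := (pairStepS_eq_some δ s a u).mp hd
      have hd1 : δ s.val.1 a = some u.val.1 :=
        ((pairStep_eq_some δ s.val a u.val).mp hps).1
      simp only [probWord, hd, hd1, Option.elim_some]
      rw [probWord_pairStepS δ P w u t h]

lemma matrix_pow_entry {S : Type*} [Fintype S] [DecidableEq S] [Fintype A'] (δ' : S → A' → Option S)
    (P' : S → A' → ℝ) :
    ∀ (L : ℕ) (s t : S),
      ((Matrix.of fun s t => ∑ a : A', if δ' s a = some t then P' s a else 0) ^ L) s t =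
        ∑ w : Fin L → A', if stepWord δ' s (List.ofFn w) = some t
          then probWord P' δ' s (List.ofFn w) else 0
  | 0, s, t => by
    rw [pow_zero, Matrix.one_apply, Fintype.sum_unique]
    simp [stepWord, probWord, eq_comm]
  | L + 1, s, t => by
    rw [pow_succ', Matrix.mul_apply]
    rw [← Fintype.sum_equiv (Fin.consEquiv (fun _ => A'))
      (fun p : A' × (Fin L → A') =>
        if stepWord δ' s (List.ofFn (Fin.cons p.1 p.2)) = some t
          then probWord P' δ' s (List.ofFn (Fin.cons p.1 p.2)) else 0)
      (fun w => if stepWord δ' s (List.ofFn w) = some t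
          then probWord P' δ' s (List.ofFn w) else 0)
      (fun p => rfl), Fintype.sum_prod_type]
    have hcons : ∀ (a : A') (w : Fin L → A'),
        List.ofFn (Fin.cons a w) = a :: List.ofFn w := by
      intro a w; simp [List.ofFn_succ]
    simp only [hcons]
    have hexp : ∀ u : S,
        (Matrix.of fun s t => ∑ a : A', if δ' s a = some t then P' s a else 0) s u *
            (((Matrix.of fun s t => ∑ a : A', if δ' s a = some t then P' s a else 0) ^ L) u t) =
          ∑ a : A', if δ' s a = some u
            then P' s a * (((Matrix.of fun s t =>
              ∑ a : A', if δ' s a = some t then P' s a else 0) ^ L) u t) else 0 := by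
      intro u
      rw [Matrix.of_apply, Finset.sum_mul]
      exact Finset.sum_congr rfl fun a _ => by split <;> simp
    simp only [hexp]
    rw [Finset.sum_comm]
    refine Finset.sum_congr rfl fun a _ => ?_
    cases hd : δ' s a with
    | none =>
      simp [stepWord, hd]
    | some u0 =>
      rw [Finset.sum_eq_single u0]
      · rw [if_pos rfl, matrix_pow_entry δ' P' L u0 t, Finset.mul_sum]
        refine Finset.sum_congr rfl fun w _ => ?_
        simp only [stepWord, probWord, hd, Option.bind_some, Option.elim_some,
          mul_ite, mul_zero]
      · intro u _ hu
        rw [if_neg]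
        intro hc; exact hu (Option.some_inj.mp hc).symm
      · intro hu; exact absurd (Finset.mem_univ u0) hu

end AuxStmt1

section AuxStmt1F

variable {Q' A' : Type*} [Fintype Q'] [Fintype A']

lemma pairMatrix_pow_entry (δ : Q' → A' → Option Q') (P : Q' → A' → ℝ) (L : ℕ)
    (s t : PairState Q') :
    (pairMatrix δ P ^ L) s t = ∑ w : Fin L → A',
      if stepWord (pairStepS δ) s (List.ofFn w) = some t
        then probWord (fun (u : PairState Q') a => P u.val.1 a) (pairStepS δ) s
          (List.ofFn w) else 0 := by
  have hM : pairMatrix δ P =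
      (Matrix.of fun s t => ∑ a : A', if pairStepS δ s a = some t then
          (fun (u : PairState Q') (a : A') => P u.val.1 a) s a else 0) := by
    funext s t
    simp only [pairMatrix, Matrix.of_apply, pairStepS_eq_some]
  rw [hM]
  exact matrix_pow_entry (pairStepS δ) (fun (u : PairState Q') (a : A') => P u.val.1 a) L s t

lemma RLrow_eq (δ : Q' → A' → Option Q') (P : Q' → A' → ℝ) (L : ℕ) (s : PairState Q') :
    RLrow δ P L s = ∑ w : Fin L → A',
      Option.elim (stepWord (pairStepS δ) s (List.ofFn w)) 0
        (fun _ => probWord P δ s.val.1 (List.ofFn w)) := by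
  unfold RLrow
  simp only [pairMatrix_pow_entry]
  rw [Finset.sum_comm]
  refine Finset.sum_congr rfl fun w _ => ?_
  cases h : stepWord (pairStepS δ) s (List.ofFn w) with
  | none => simp [h]
  | some t0 =>
    rw [Option.elim_some, ← probWord_pairStepS δ P (List.ofFn w) s t0 h]
    rw [Finset.sum_eq_single t0]
    · rw [if_pos rfl]
    · intro t _ ht
      rw [if_neg]
      intro hc; exact ht (Option.some_inj.mp hc).symm
    · intro ht; exact absurd (Finset.mem_univ t0) ht

lemma elim_nonneg (δ : Q' → A' → Option Q') (P : Q' → A' → ℝ) (hP : ∀ q a, 0 ≤ P q a)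
    (s : PairState Q') (w : List A') :
    0 ≤ Option.elim (stepWord (pairStepS δ) s w) 0
      (fun _ => probWord P δ s.val.1 w) := by
  cases h : stepWord (pairStepS δ) s w with
  | none => simp
  | some t => simpa using probWord_nonneg' P δ hP w s.val.1

lemma key_upper (δ : Q' → A' → Option Q') (P : Q' → A' → ℝ) (hP : ∀ q a, 0 ≤ P q a)
    (w : List A') (p : Q') (hw : ¬ IsResetWord δ w) :
    probWord P δ p w ≤ ∑ q : Q', if h : p = q then 0 else
      Option.elim (stepWord (pairStepS δ) ⟨(p, q), h⟩ w) 0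
        (fun _ => probWord P δ p w) := by
  have hterm : ∀ q : Q', 0 ≤ if h : p = q then (0 : ℝ) else
      Option.elim (stepWord (pairStepS δ) ⟨(p, q), h⟩ w) 0
        (fun _ => probWord P δ p w) := by
    intro q
    split
    · exact le_refl 0
    · exact elim_nonneg δ P hP _ w
  by_cases h0 : probWord P δ p w = 0
  · exact le_trans h0.le (Finset.sum_nonneg fun q _ => hterm q)
  · obtain ⟨r, hr⟩ := stepWord_of_probWord_ne P δ w p h0
    rw [IsResetWord] at hw
    push_neg at hw
    obtain ⟨q, s, hq, hsr⟩ := hw r ⟨p, hr⟩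
    have hpq : p ≠ q := by
      rintro rfl
      exact hsr (Option.some_inj.mp (hq.symm.trans hr)) -- s = r
    have hrs : r ≠ s := fun h => hsr h.symm
    have hpair : stepWord (pairStep δ) (p, q) w = some (r, s) :=
      stepWord_pair_of δ w p q r s hr hq hrs
    have hS : stepWord (pairStepS δ) ⟨(p, q), hpq⟩ w = some ⟨(r, s), hrs⟩ :=
      (stepWord_pairStepS δ w ⟨(p, q), hpq⟩ ⟨(r, s), hrs⟩).mpr hpair
    have hle := Finset.single_le_sum (f := fun q : Q' => if h : p = q then (0 : ℝ) else
        Option.elim (stepWord (pairStepS δ) ⟨(p, q), h⟩ w) 0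
          (fun _ => probWord P δ p w)) (fun q _ => hterm q) (Finset.mem_univ q)
    refine le_trans ?_ hle
    simp only [dif_neg hpq, hS, Option.elim_some]
    exact le_rfl

lemma key_lower (δ : Q' → A' → Option Q') (P : Q' → A' → ℝ) (hP : ∀ q a, 0 ≤ P q a)
    (w : List A') (p q : Q') (h : p ≠ q) :
    Option.elim (stepWord (pairStepS δ) ⟨(p, q), h⟩ w) 0
        (fun _ => probWord P δ p w)
      ≤ if IsResetWord δ w then 0 else probWord P δ p w := by
  cases hS : stepWord (pairStepS δ) ⟨(p, q), h⟩ w with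
  | none =>
    rw [Option.elim_none]
    split
    · exact le_refl 0
    · exact probWord_nonneg' P δ hP w p
  | some t =>
    have hpair := (stepWord_pairStepS δ w ⟨(p, q), h⟩ t).mp hS
    obtain ⟨h1, h2, -⟩ := stepWord_pair_proj δ w (p, q) t.val hpair
    have hnr : ¬ IsResetWord δ w := by
      rintro ⟨r, -, hall⟩
      exact t.prop ((hall p t.val.1 h1).trans (hall q t.val.2 h2).symm)
    rw [Option.elim_some, if_neg hnr]

end AuxStmt1F

/-- Corollary 1: for an exact ε-machine with steady state distribution `π`
and each `L ≥ 1`, `∑_p π_p MaxR^L_p ≤ P_π(NSYN_L) ≤ ∑_p π_p R^L_p`. -/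
theorem stmt1 {Q A : Type*} [Fintype Q] [Fintype A] (M : EpsMachine Q A)
    (hexact : IsExact M) (π : Q → ℝ) (hπ : IsStationaryDist M.δ M.P π) (L : ℕ) (hL : 1 ≤ L) :
    (∑ p : Q, π p * MaxRLp M.δ M.P L p) ≤ nsynProb M.δ M.P π L ∧
      nsynProb M.δ M.P π L ≤ ∑ p : Q, π p * RLp M.δ M.P L p := by
  obtain ⟨hpos, hsum, hstat⟩ := hπ
  have hπ0 : ∀ p, 0 ≤ π p := fun p => (hpos p).le
  have hP : ∀ q a, 0 ≤ M.P q a := M.nonneg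
  have hre : nsynProb M.δ M.P π L = ∑ p : Q, π p * ∑ w : Fin L → A,
      (if IsResetWord M.δ (List.ofFn w) then 0
        else probWord M.P M.δ p (List.ofFn w)) := by
    unfold nsynProb Ppi
    have hpush : ∀ w : Fin L → A, (if IsResetWord M.δ (List.ofFn w) then 0
        else ∑ q : Q, π q * probWord M.P M.δ q (List.ofFn w)) =
        ∑ q : Q, π q * (if IsResetWord M.δ (List.ofFn w) then 0
          else probWord M.P M.δ q (List.ofFn w)) := by
      intro w
      by_cases hw : IsResetWord M.δ (List.ofFn w)
      · simp [hw]
      · simp [hw]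
    simp only [hpush]
    rw [Finset.sum_comm]
    refine Finset.sum_congr rfl fun p _ => ?_
    rw [Finset.mul_sum]
  constructor
  · -- lower bound
    rw [hre]
    refine Finset.sum_le_sum fun p _ => ?_
    refine mul_le_mul_of_nonneg_left ?_ (hπ0 p)
    refine Real.sSup_le ?_ ?_
    · rintro x ⟨q, hq, rfl⟩
      rw [RLrow_eq]
      exact Finset.sum_le_sum fun w _ => key_lower M.δ M.P hP (List.ofFn w) p q hq
    · refine Finset.sum_nonneg fun w _ => ?_
      split
      · exact le_refl 0
      · exact probWord_nonneg' M.P M.δ hP (List.ofFn w) p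
  · -- upper bound
    rw [hre]
    have hRLp : ∀ p : Q, RLp M.δ M.P L p = ∑ w : Fin L → A, ∑ q : Q,
        if h : p = q then 0 else
          Option.elim (stepWord (pairStepS M.δ) ⟨(p, q), h⟩ (List.ofFn w)) 0
            (fun _ => probWord M.P M.δ p (List.ofFn w)) := by
      intro p
      unfold RLp
      rw [Finset.sum_comm]
      refine Finset.sum_congr rfl fun q _ => ?_
      by_cases h : p = q
      · simp [h]
      · rw [dif_neg h, RLrow_eq]
        refine Finset.sum_congr rfl fun w _ => ?_
        rw [dif_neg h]
    simp only [hRLp]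
    refine Finset.sum_le_sum fun p _ => ?_
    rw [Finset.mul_sum, Finset.mul_sum]
    refine Finset.sum_le_sum fun w _ => ?_
    by_cases hw : IsResetWord M.δ (List.ofFn w)
    · rw [if_pos hw, mul_zero]
      refine mul_nonneg (hπ0 p) (Finset.sum_nonneg fun q _ => ?_)
      split
      · exact le_refl 0
      · exact elim_nonneg M.δ M.P hP _ _
    · rw [if_neg hw]
      exact mul_le_mul_of_nonneg_left
        (key_upper M.δ M.P hP (List.ofFn w) p hw) (hπ0 p)
end

section
/- Let (Q, Σ, δ) be a strongly connected partial DFA. If for every pair of distinct states p, q ∈ Q there exists a word w ∈ Σ* with |{p,q}.w| = 1, then (Q, Σ, δ) is synchronizing, i.e. there exists a word w with |Q.w| = 1. Equivalently, a strongly connected partial DFA fails to be synchronizing if and only if it has a deadlock pair. -/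
open scoped BigOperators ENNReal

attribute [local instance] Classical.propDecidable

variable {Q A : Type*}

variable [Fintype Q] [Fintype A]

/-- `π` is a positive stationary (steady state) probability distribution of the Markov chain
on the machine states with transition probabilities `P(p → q) = ∑_{x : p.x = q} P_p(x)`. -/
def IsStationaryDistrib (δ : Q → A → Option Q) (P : Q → A → ℝ) (π : Q → ℝ) : Prop :=
  (∀ q, 0 < π q) ∧ (∑ q : Q, π q = 1) ∧
    ∀ q : Q, π q = ∑ p : Q, π p * ∑ a : A, if δ p a = some q then P p a else 0

section Stmt5Aux

lemma stepWord_append' {Q A : Type*} (δ : Q → A → Option Q) (u v : List A) (p : Q) :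
    stepWord δ p (u ++ v) = (stepWord δ p u).bind fun q => stepWord δ q v := by
  induction u generalizing p with
  | nil => simp [stepWord]
  | cons a u ih =>
    simp only [List.cons_append, stepWord]
    cases δ p a with
    | none => simp
    | some q' => simp [ih]

/-- The set of defined images of all states under `w`. -/
noncomputable def imgSet {Q A : Type*} [Fintype Q] (δ : Q → A → Option Q) (w : List A) :
    Finset Q :=
  Finset.univ.filter (fun s => ∃ q, stepWord δ q w = some s)

lemma exists_reset_of_mergable {Q A : Type*} [Fintype Q] [Nonempty Q]
    (δ : Q → A → Option Q)
    (hm : ∀ p q : Q, p ≠ q → ∃ w : List A, MergedBy δ p q w) :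
    ∃ w : List A, IsResetWord δ w := by
  classical
  suffices h : ∀ n : ℕ, ∀ w : List A, (imgSet δ w).Nonempty → (imgSet δ w).card ≤ n →
      ∃ w' : List A, IsResetWord δ w' by
    refine h (Fintype.card Q) [] ?_ ?_
    · exact ⟨Classical.arbitrary Q, by simp [imgSet, stepWord]⟩
    · simpa using Finset.card_le_card (Finset.subset_univ (imgSet δ ([] : List A)))
  intro n
  induction n with
  | zero =>
    intro w hne hcard
    exact absurd (Nat.le_antisymm hcard (Nat.zero_le _))
      (Finset.card_ne_zero_of_mem hne.choose_spec)
  | succ n ih =>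
    intro w hne hcard
    by_cases h1 : (imgSet δ w).card ≤ 1
    · -- the image is a singleton; `w` is a reset word
      have hc1 : (imgSet δ w).card = 1 := Nat.le_antisymm h1 hne.card_pos
      obtain ⟨r, hr⟩ := Finset.card_eq_one.mp hc1
      have hrmem : r ∈ imgSet δ w := by rw [hr]; exact Finset.mem_singleton_self r
      obtain ⟨q₀, hq₀⟩ := (Finset.mem_filter.mp hrmem).2
      refine ⟨w, r, ⟨q₀, hq₀⟩, fun q s hqs => ?_⟩
      have : s ∈ imgSet δ w := Finset.mem_filter.mpr ⟨Finset.mem_univ _, ⟨q, hqs⟩⟩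
      rw [hr] at this
      exact Finset.mem_singleton.mp this
    · push_neg at h1
      obtain ⟨p, hp, q, hq, hpq⟩ := Finset.one_lt_card.mp h1
      obtain ⟨u, r, hror, hpr, hqr⟩ := hm p q hpq
      -- r is in the image of w ++ u
      have hrmem : r ∈ imgSet δ (w ++ u) := by
        rcases hror with hpu | hqu
        · obtain ⟨q₀, hq₀⟩ := (Finset.mem_filter.mp hp).2
          refine Finset.mem_filter.mpr ⟨Finset.mem_univ _, ⟨q₀, ?_⟩⟩
          rw [stepWord_append', hq₀, Option.bind_some]; exact hpu
        · obtain ⟨q₀, hq₀⟩ := (Finset.mem_filter.mp hq).2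
          refine Finset.mem_filter.mpr ⟨Finset.mem_univ _, ⟨q₀, ?_⟩⟩
          rw [stepWord_append', hq₀, Option.bind_some]; exact hqu
      -- the image of w ++ u is contained in insert r (image of erased set)
      have hsub : imgSet δ (w ++ u) ⊆
          insert r ((((imgSet δ w).erase p).erase q).image
            (fun t => (stepWord δ t u).getD r)) := by
        intro s hs
        obtain ⟨q₀, hq₀⟩ := (Finset.mem_filter.mp hs).2
        rw [stepWord_append'] at hq₀
        obtain ⟨t, ht1, ht2⟩ := Option.bind_eq_some_iff.mp hq₀
        by_cases htp : t = p
        · subst htp; exact Finset.mem_insert.mpr (Or.inl (hpr s ht2))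
        by_cases htq : t = q
        · subst htq; exact Finset.mem_insert.mpr (Or.inl (hqr s ht2))
        refine Finset.mem_insert.mpr (Or.inr (Finset.mem_image.mpr ⟨t, ?_, ?_⟩))
        · exact Finset.mem_erase.mpr ⟨htq, Finset.mem_erase.mpr ⟨htp,
            Finset.mem_filter.mpr ⟨Finset.mem_univ _, ⟨q₀, ht1⟩⟩⟩⟩
        · rw [ht2]; rfl
      -- cardinality bound
      have hqp : q ∈ (imgSet δ w).erase p := Finset.mem_erase.mpr ⟨Ne.symm hpq, hq⟩
      have hcard2 : (((imgSet δ w).erase p).erase q).card = (imgSet δ w).card - 2 := by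
        rw [Finset.card_erase_of_mem hqp, Finset.card_erase_of_mem hp]; omega
      have hle : (imgSet δ (w ++ u)).card ≤ (imgSet δ w).card - 1 := by
        calc (imgSet δ (w ++ u)).card
            ≤ (insert r ((((imgSet δ w).erase p).erase q).image
                (fun t => (stepWord δ t u).getD r))).card := Finset.card_le_card hsub
          _ ≤ ((((imgSet δ w).erase p).erase q).image
                (fun t => (stepWord δ t u).getD r)).card + 1 := Finset.card_insert_le _ _
          _ ≤ (((imgSet δ w).erase p).erase q).card + 1 := by
              exact Nat.add_le_add_right (Finset.card_image_le) 1
          _ = (imgSet δ w).card - 2 + 1 := by rw [hcard2]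
          _ ≤ (imgSet δ w).card - 1 := by omega
      exact ih (w ++ u) ⟨r, hrmem⟩ (by omega)

end Stmt5Aux

/-- a strongly connected partial DFA in which every pair of distinct states
can be merged by some word is synchronizing; equivalently, a strongly connected partial DFA
fails to be synchronizing if and only if it has a deadlock pair. -/
theorem stmt5 {Q A : Type*} [Fintype Q] [Fintype A] [Nonempty Q] (δ : Q → A → Option Q)
    (hsc : ∀ p q : Q, ∃ w : List A, stepWord δ p w = some q) :
    ((∀ p q : Q, p ≠ q → ∃ w : List A, MergedBy δ p q w) → ∃ w : List A, IsResetWord δ w) ∧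
      (¬ (∃ w : List A, IsResetWord δ w) ↔ ∃ p q : Q, IsDeadlockPair δ p q) := by
  refine ⟨fun hm => exists_reset_of_mergable δ hm, ?_, ?_⟩
  · intro hns
    by_contra hnd
    push_neg at hnd
    apply hns
    apply exists_reset_of_mergable δ
    intro p q hpq
    have h := hnd p q
    rw [IsDeadlockPair] at h
    push_neg at h
    obtain ⟨w, hw⟩ := h hpq
    exact ⟨w, hw⟩
  · rintro ⟨p, q, hpq, hdl⟩ ⟨w, r, ⟨q₀, hq₀⟩, hall⟩
    obtain ⟨u, hu⟩ := hsc p q₀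
    apply hdl (u ++ w)
    refine ⟨r, Or.inl ?_, ?_, ?_⟩
    · rw [stepWord_append', hu, Option.bind_some]; exact hq₀
    · intro s hs
      rw [stepWord_append'] at hs
      obtain ⟨t, _, h2⟩ := Option.bind_eq_some_iff.mp hs
      exact hall t s h2
    · intro s hs
      rw [stepWord_append'] at hs
      obtain ⟨t, _, h2⟩ := Option.bind_eq_some_iff.mp hs
      exact hall t s h2
end

section
/- Let A = (Q, Σ, δ, P) be a non-exact ε-machine. Then E_M > 0 for each deadlock component M of the pair semi-machine A₂. -/
open scoped BigOperators ENNReal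

attribute [local instance] Classical.propDecidable

variable {Q A : Type*}

variable [Fintype Q] [Fintype A]

section StmtAux
variable {Q A : Type*}

lemma deadlock_step' (δ : Q → A → Option Q) {p q : Q} (hd : IsDeadlockPair δ p q) (a : A) {p' : Q}
    (h : δ p a = some p') : ∃ q', δ q a = some q' ∧ p' ≠ q' := by
  rcases hq : δ q a with _ | q'
  · refine absurd (?_ : MergedBy δ p q [a]) (hd.2 [a])
    refine ⟨p', Or.inl (by simp [stepWord, h]), fun s hs => ?_, fun s hs => ?_⟩
    · simp [stepWord, h] at hs; exact hs.symm
    · simp [stepWord, hq] at hs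
  · refine ⟨q', rfl, fun he => hd.2 [a] ?_⟩
    refine ⟨p', Or.inl (by simp [stepWord, h]), fun s hs => ?_, fun s hs => ?_⟩
    · simp [stepWord, h] at hs; exact hs.symm
    · simp [stepWord, hq] at hs; rw [he]; exact hs.symm

lemma deadlock_symm' (δ : Q → A → Option Q) {p q : Q} (hd : IsDeadlockPair δ p q) :
    IsDeadlockPair δ q p :=
  ⟨hd.1.symm, fun w ⟨r, h1, h2, h3⟩ => hd.2 w ⟨r, h1.symm, h3, h2⟩⟩

variable [Fintype Q] [Fintype A]

lemma support_imp (M : EpsMachine Q A) {p q : Q} (hd : IsDeadlockPair M.δ p q) (a : A)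
    (h : 0 < M.P p a) : 0 < M.P q a := by
  have h1 : M.δ p a ≠ none := fun hn => h.ne' ((M.zero_iff p a).mpr hn)
  rcases hp : M.δ p a with _ | p'
  · exact absurd hp h1
  obtain ⟨q', hq, -⟩ := deadlock_step' M.δ hd a hp
  have h2 : M.P q a ≠ 0 := fun h0 => by rw [(M.zero_iff q a).mp h0] at hq; cases hq
  exact lt_of_le_of_ne (M.nonneg q a) (Ne.symm h2)

lemma pairStep_of_pos (M : EpsMachine Q A) {pq : Q × Q} (hd : IsDeadlockPair M.δ pq.1 pq.2)
    (a : A) (h : 0 < M.P pq.1 a) :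
    ∃ p' q', M.δ pq.1 a = some p' ∧ M.δ pq.2 a = some q' ∧ p' ≠ q' ∧
      pairStep M.δ pq a = some (p', q') := by
  have h1 : M.δ pq.1 a ≠ none := fun hn => h.ne' ((M.zero_iff pq.1 a).mpr hn)
  rcases hp : M.δ pq.1 a with _ | p'
  · exact absurd hp h1
  obtain ⟨q', hq, hne⟩ := deadlock_step' M.δ hd a hp
  exact ⟨p', q', rfl, hq, hne, by simp [pairStep, hp, hq, hne]⟩

lemma pairP_eq (M : EpsMachine Q A) {pq : Q × Q} (hd : IsDeadlockPair M.δ pq.1 pq.2) (a : A) :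
    pairP M.δ M.P pq a = M.P pq.1 a := by
  by_cases h : 0 < M.P pq.1 a
  · obtain ⟨p', q', hp, hq, hne, hps⟩ := pairStep_of_pos M hd a h
    simp [pairP, hps]
  · have h0 : M.P pq.1 a = 0 := le_antisymm (not_lt.mp h) (M.nonneg _ _)
    simp [pairP, h0]

end StmtAux

/-- Lemma 4: `E_M > 0` for each deadlock component `M` of the pair
semi-machine of a non-exact ε-machine (with `ρ` the equilibrium distribution of the edge
machine of `M`). -/
theorem stmt13 {Q A : Type*} [Fintype Q] [Fintype A] (M : EpsMachine Q A)
    (hne : ¬ IsExact M) (S : Set (Q × Q)) (hS : IsDeadlockComponent M.δ S)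
    (ρ : EdgeState M.δ M.P S → ℝ) (hρ : IsEdgeStationary M.δ M.P S ρ) :
    0 < EMval M.δ M.P S ρ := by
  classical
  obtain ⟨hSne, hdl, hclosed, -⟩ := hS
  obtain ⟨hρ0, hρ1, hρst⟩ := hρ
  set W : Q × Q → ℝ := fun j => ∑ s : EdgeState M.δ M.P S,
    ρ s * (if pairStep M.δ s.val.2 s.val.1 = some j then (1:ℝ) else 0) with hWdef
  have hedgeP : ∀ t : EdgeState M.δ M.P S, 0 < M.P t.val.2.1 t.val.1 := fun t => by
    have h := t.prop.2
    rwa [pairP_eq M (hdl _ t.prop.1)] at h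
  have hedgeQ : ∀ t : EdgeState M.δ M.P S, 0 < M.P t.val.2.2 t.val.1 := fun t =>
    support_imp M (hdl _ t.prop.1) _ (hedgeP t)
  have hWnn : ∀ j, 0 ≤ W j := fun j => Finset.sum_nonneg fun s _ =>
    mul_nonneg (hρ0 s) (by split <;> norm_num)
  have hkey : ∀ t : EdgeState M.δ M.P S, ρ t = W t.val.2 * M.P t.val.2.1 t.val.1 := by
    intro t
    rw [hρst t, hWdef]
    rw [Finset.sum_mul]
    refine Finset.sum_congr rfl fun s _ => ?_
    rw [pairP_eq M (hdl _ t.prop.1)]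
    split <;> ring
  have hconv : ∀ F : A × (Q × Q) → ℝ, (∑ t : EdgeState M.δ M.P S, F t.val) =
      ∑ e : A × (Q × Q), if e.2 ∈ S ∧ 0 < pairP M.δ M.P e.2 e.1 then F e else 0 := by
    intro F
    calc (∑ t : EdgeState M.δ M.P S, F t.val)
        = ∑ e ∈ Finset.univ.filter (fun e : A × (Q × Q) =>
            e.2 ∈ S ∧ 0 < pairP M.δ M.P e.2 e.1), F e :=
          (Finset.sum_subtype _ (by simp) F).symm
      _ = _ := Finset.sum_filter _ _
  have hsupp : ∀ j ∈ S, ∀ a : A, ¬ 0 < M.P j.1 a → M.P j.2 a = 0 := by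
    intro j hj a hpa
    by_contra h2
    exact hpa (support_imp M (deadlock_symm' _ (hdl j hj)) a
      (lt_of_le_of_ne (M.nonneg _ _) (Ne.symm h2)))
  have hrow : ∀ (f : Q × Q → Q), (∀ j ∈ S, f j = j.1 ∨ f j = j.2) →
      (∑ t : EdgeState M.δ M.P S, W t.val.2 * M.P (f t.val.2) t.val.1)
        = ∑ j : Q × Q, if j ∈ S then W j else 0 := by
    intro f hf
    rw [hconv (fun e => W e.2 * M.P (f e.2) e.1)]
    rw [Fintype.sum_prod_type, Finset.sum_comm]
    refine Finset.sum_congr rfl fun j _ => ?_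
    by_cases hj : j ∈ S
    · rw [if_pos hj]
      have hterm : ∀ a : A, (if (((a, j) : A × (Q × Q)).2 ∈ S ∧
          0 < pairP M.δ M.P ((a, j) : A × (Q × Q)).2 ((a, j) : A × (Q × Q)).1)
            then W j * M.P (f j) a else 0) = W j * M.P (f j) a := by
        intro a
        split
        · rfl
        · rename_i hcond
          rw [pairP_eq M (hdl _ hj)] at hcond
          push_neg at hcond
          have hpa := hcond hj
          rcases hf j hj with hfj | hfj
          · rw [hfj]
            have h0 : M.P j.1 a = 0 := le_antisymm hpa (M.nonneg _ _)
            rw [h0, mul_zero]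
          · rw [hfj, hsupp j hj a (not_lt.mpr hpa), mul_zero]
      rw [Finset.sum_congr rfl fun a _ => hterm a, ← Finset.mul_sum]
      rcases hf j hj with hfj | hfj
      · rw [hfj, M.sum_one, mul_one]
      · rw [hfj]
        have : (∑ a : A, M.P j.2 a) = 1 := M.sum_one j.2
        rw [this, mul_one]
    · rw [if_neg hj]
      refine Finset.sum_eq_zero fun a _ => ?_
      rw [if_neg]
      exact fun h => hj h.1
  have hsum1 : (∑ t : EdgeState M.δ M.P S, W t.val.2 * M.P t.val.2.1 t.val.1)
      = ∑ j : Q × Q, if j ∈ S then W j else 0 :=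
    hrow (fun j => j.1) (fun j _ => Or.inl rfl)
  have hsum2 : (∑ t : EdgeState M.δ M.P S, W t.val.2 * M.P t.val.2.2 t.val.1)
      = ∑ j : Q × Q, if j ∈ S then W j else 0 :=
    hrow (fun j => j.2) (fun j _ => Or.inr rfl)
  have htot : (∑ j : Q × Q, if j ∈ S then W j else 0) = 1 := by
    rw [← hsum1, ← Finset.sum_congr rfl fun t _ => hkey t]
    exact hρ1
  have hg1 : (∑ t : EdgeState M.δ M.P S,
      ρ t * (M.P t.val.2.2 t.val.1 / M.P t.val.2.1 t.val.1)) = 1 := by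
    have he : ∀ t : EdgeState M.δ M.P S,
        ρ t * (M.P t.val.2.2 t.val.1 / M.P t.val.2.1 t.val.1)
          = W t.val.2 * M.P t.val.2.2 t.val.1 := by
      intro t
      rw [hkey t]
      have hp := (hedgeP t).ne'
      field_simp
    rw [Finset.sum_congr rfl fun t _ => he t, hsum2, htot]
  -- existence of a strict witness
  have hex : ∃ t : EdgeState M.δ M.P S, 0 < ρ t ∧
      M.P t.val.2.1 t.val.1 ≠ M.P t.val.2.2 t.val.1 := by
    by_contra hcon
    push_neg at hcon
    have hr0 : ∃ t : EdgeState M.δ M.P S, 0 < ρ t := by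
      by_contra hno
      push_neg at hno
      have hz : ∀ t : EdgeState M.δ M.P S, ρ t = 0 :=
        fun t => le_antisymm (hno t) (hρ0 t)
      rw [Finset.sum_congr rfl fun t _ => hz t, Finset.sum_const_zero] at hρ1
      norm_num at hρ1
    obtain ⟨r0, hr0⟩ := hr0
    have hTedge : ∀ j : Q × Q, j ∈ S ∧ 0 < W j → ∀ a : A, 0 < M.P j.1 a →
        ∃ h : (((a, j) : A × (Q × Q)).2 ∈ S ∧
          0 < pairP M.δ M.P ((a, j) : A × (Q × Q)).2 ((a, j) : A × (Q × Q)).1),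
          0 < ρ (⟨(a, j), h⟩ : EdgeState M.δ M.P S) := by
      intro j hj a hpa
      have hmem : (((a, j) : A × (Q × Q)).2 ∈ S ∧
          0 < pairP M.δ M.P ((a, j) : A × (Q × Q)).2 ((a, j) : A × (Q × Q)).1) := by
        refine ⟨hj.1, ?_⟩
        rw [pairP_eq M (hdl _ hj.1)]
        exact hpa
      refine ⟨hmem, ?_⟩
      rw [hkey ⟨(a, j), hmem⟩]
      exact mul_pos hj.2 hpa
    have hTeq : ∀ j : Q × Q, j ∈ S ∧ 0 < W j → ∀ a : A, M.P j.1 a = M.P j.2 a := by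
      intro j hj a
      by_cases hpa : 0 < M.P j.1 a
      · obtain ⟨hmem, hrpos⟩ := hTedge j hj a hpa
        exact hcon _ hrpos
      · have h1 : M.P j.1 a = 0 := le_antisymm (not_lt.mp hpa) (M.nonneg _ _)
        rw [h1, hsupp j hj.1 a hpa]
    have hTclosed : ∀ j : Q × Q, j ∈ S ∧ 0 < W j → ∀ a : A, 0 < M.P j.1 a →
        ∀ j' : Q × Q, pairStep M.δ j a = some j' → j' ∈ S ∧ 0 < W j' := by
      intro j hj a ha j' hj'
      refine ⟨hclosed j hj.1 a j' hj', ?_⟩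
      obtain ⟨hmem, hrpos⟩ := hTedge j hj a ha
      have hle : ρ (⟨(a, j), hmem⟩ : EdgeState M.δ M.P S) *
          (if pairStep M.δ j a = some j' then (1:ℝ) else 0) ≤ W j' := by
        refine Finset.single_le_sum (f := fun s : EdgeState M.δ M.P S =>
          ρ s * (if pairStep M.δ s.val.2 s.val.1 = some j' then (1:ℝ) else 0))
          (fun s _ => mul_nonneg (hρ0 s) (by split <;> norm_num)) (Finset.mem_univ _)
      rw [if_pos hj', mul_one] at hle
      exact lt_of_lt_of_le hrpos hle
    have hprob : ∀ u : List A, ∀ j : Q × Q, j ∈ S ∧ 0 < W j →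
        probWord M.P M.δ j.1 u = probWord M.P M.δ j.2 u := by
      intro u
      induction u with
      | nil => intro j _; rfl
      | cons a w ih =>
        intro j hj
        have hPa := hTeq j hj a
        by_cases hpa : 0 < M.P j.1 a
        · obtain ⟨p', q', hp, hq, hne', hps⟩ := pairStep_of_pos M (hdl j hj.1) a hpa
          have hmem := hTclosed j hj a hpa _ hps
          have hih := ih (p', q') hmem
          simp only [probWord, hp, hq, Option.elim_some] at *
          rw [hPa, hih]
        · have h1 : M.P j.1 a = 0 := le_antisymm (not_lt.mp hpa) (M.nonneg _ _)
          have h2 : M.P j.2 a = 0 := hsupp j hj.1 a hpa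
          simp [probWord, h1, h2]
    have hr0T : r0.val.2 ∈ S ∧ 0 < W r0.val.2 := by
      refine ⟨r0.prop.1, ?_⟩
      rw [hkey r0] at hr0
      by_contra hW0
      push_neg at hW0
      nlinarith [hedgeP r0]
    obtain ⟨u, hu⟩ := M.nonequiv _ _ (hdl r0.val.2 r0.prop.1).1
    exact hu (hprob u r0.val.2 hr0T)
  obtain ⟨r0, hr0pos, hr0ne⟩ := hex
  have hterm : ∀ t : EdgeState M.δ M.P S,
      ρ t * (1 - M.P t.val.2.2 t.val.1 / M.P t.val.2.1 t.val.1) ≤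
        ρ t * Real.log (M.P t.val.2.1 t.val.1 / M.P t.val.2.2 t.val.1) := by
    intro t
    refine mul_le_mul_of_nonneg_left ?_ (hρ0 t)
    have hgpos : 0 < M.P t.val.2.2 t.val.1 / M.P t.val.2.1 t.val.1 :=
      div_pos (hedgeQ t) (hedgeP t)
    have hlog := Real.log_le_sub_one_of_pos hgpos
    rw [Real.log_div (hedgeQ t).ne' (hedgeP t).ne'] at hlog
    rw [Real.log_div (hedgeP t).ne' (hedgeQ t).ne']
    linarith
  have hstrict : ρ r0 * (1 - M.P r0.val.2.2 r0.val.1 / M.P r0.val.2.1 r0.val.1) <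
      ρ r0 * Real.log (M.P r0.val.2.1 r0.val.1 / M.P r0.val.2.2 r0.val.1) := by
    refine mul_lt_mul_of_pos_left ?_ hr0pos
    have hgpos : 0 < M.P r0.val.2.2 r0.val.1 / M.P r0.val.2.1 r0.val.1 :=
      div_pos (hedgeQ r0) (hedgeP r0)
    have hgne : M.P r0.val.2.2 r0.val.1 / M.P r0.val.2.1 r0.val.1 ≠ 1 :=
      fun h => hr0ne (((div_eq_one_iff_eq (hedgeP r0).ne').mp h).symm)
    have hlog := Real.log_lt_sub_one_of_pos hgpos hgne
    rw [Real.log_div (hedgeQ r0).ne' (hedgeP r0).ne'] at hlog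
    rw [Real.log_div (hedgeP r0).ne' (hedgeQ r0).ne']
    linarith
  have hsum := Finset.sum_lt_sum (fun t (_ : t ∈ Finset.univ) => hterm t)
    ⟨r0, Finset.mem_univ r0, hstrict⟩
  have hzero : (∑ t : EdgeState M.δ M.P S,
      ρ t * (1 - M.P t.val.2.2 t.val.1 / M.P t.val.2.1 t.val.1)) = 0 := by
    have he : ∀ t : EdgeState M.δ M.P S,
        ρ t * (1 - M.P t.val.2.2 t.val.1 / M.P t.val.2.1 t.val.1)
          = ρ t - ρ t * (M.P t.val.2.2 t.val.1 / M.P t.val.2.1 t.val.1) :=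
      fun t => by ring
    rw [Finset.sum_congr rfl fun t _ => he t, Finset.sum_sub_distrib, hρ1, hg1]
    norm_num
  rw [EMval]
  rw [hzero] at hsum
  exact hsum
end
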